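/- The kernel g₃(P₂) of the prolonged symbol of the extended Rapcsák operator has dimension (4n³ + 3n² − n)/6; precisely, the subspace of symmetric trilinear forms A : V × V × V → ℝ satisfying A(X, Y, C) = 0 for all X, Y ∈ V and A(X, P_h Y, J Z) = A(X, P_h Z, J Y) for all X, Y, Z ∈ V has dimension (4n³ + 3n² − n)/6. -/

import Mathlib

set_option synthInstance.maxHeartbeats 1000000
set_option maxHeartbeats 1000000

noncomputable section

/-- The pointwise model `V = (Fin n → ℝ) × (Fin n → ℝ)` of the double tangent space
`T_x(TM)` for a spray on an `n`-dimensional manifold, in an adapted basis. -/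
abbrev V (n : ℕ) : Type := (Fin n → ℝ) × (Fin n → ℝ)

/-- The vertical endomorphism `J (x, y) = (0, x)`. -/
def Jmap (n : ℕ) : V n →ₗ[ℝ] V n where
  toFun p := (0, p.1)
  map_add' a b := by simp
  map_smul' c a := by simp

/-- The horizontal projector `P_h (x, y) = (x, 0)`. -/
def Ph (n : ℕ) : V n →ₗ[ℝ] V n where
  toFun p := (p.1, 0)
  map_add' a b := by simp
  map_smul' c a := by simp

/-- The `j`-th standard basis vector of `Fin n → ℝ`, indexed by `1 ≤ j ≤ n`
(zero if `j` is out of range). -/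
def dlt (n j : ℕ) : Fin n → ℝ := fun i => if (i : ℕ) + 1 = j then 1 else 0

/-- The horizontal basis vector `h_j`, `1 ≤ j ≤ n`. -/
def hvec (n j : ℕ) : V n := (dlt n j, 0)

/-- The vertical basis vector `v_j`, `1 ≤ j ≤ n`. -/
def vvec (n j : ℕ) : V n := (0, dlt n j)

/-- The spray vector `S = h_n`. -/
def Svec (n : ℕ) : V n := hvec n n

/-- The Liouville vector `C = v_n = J S`. -/
def Cvec (n : ℕ) : V n := vvec n n

/-- Bilinear forms on `V n`. -/
abbrev Bil (n : ℕ) := V n →ₗ[ℝ] V n →ₗ[ℝ] ℝ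

/-- Trilinear forms on `V n` (bundled). -/
abbrev Tri (n : ℕ) := V n →ₗ[ℝ] V n →ₗ[ℝ] V n →ₗ[ℝ] ℝ

/-- Trilinearity of a function `A : V × V × V → ℝ`. -/
def IsTrilin (n : ℕ) (A : V n → V n → V n → ℝ) : Prop :=
  (∀ X X' Y Z, A (X + X') Y Z = A X Y Z + A X' Y Z) ∧
  (∀ (c : ℝ) X Y Z, A (c • X) Y Z = c * A X Y Z) ∧
  (∀ X Y Y' Z, A X (Y + Y') Z = A X Y Z + A X Y' Z) ∧
  (∀ (c : ℝ) X Y Z, A X (c • Y) Z = c * A X Y Z) ∧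
  (∀ X Y Z Z', A X Y (Z + Z') = A X Y Z + A X Y Z') ∧
  (∀ (c : ℝ) X Y Z, A X Y (c • Z) = c * A X Y Z)

theorem IsTrilin.add {n : ℕ} {a b : V n → V n → V n → ℝ}
    (ha : IsTrilin n a) (hb : IsTrilin n b) : IsTrilin n (a + b) := by
  obtain ⟨ha1, ha2, ha3, ha4, ha5, ha6⟩ := ha
  obtain ⟨hb1, hb2, hb3, hb4, hb5, hb6⟩ := hb
  refine ⟨fun X X' Y Z => ?_, fun c X Y Z => ?_, fun X Y Y' Z => ?_,
    fun c X Y Z => ?_, fun X Y Z Z' => ?_, fun c X Y Z => ?_⟩ <;>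
      simp only [Pi.add_apply]
  · linear_combination ha1 X X' Y Z + hb1 X X' Y Z
  · linear_combination ha2 c X Y Z + hb2 c X Y Z
  · linear_combination ha3 X Y Y' Z + hb3 X Y Y' Z
  · linear_combination ha4 c X Y Z + hb4 c X Y Z
  · linear_combination ha5 X Y Z Z' + hb5 X Y Z Z'
  · linear_combination ha6 c X Y Z + hb6 c X Y Z

theorem IsTrilin.smul {n : ℕ} (c : ℝ) {a : V n → V n → V n → ℝ}
    (ha : IsTrilin n a) : IsTrilin n (c • a) := by
  obtain ⟨ha1, ha2, ha3, ha4, ha5, ha6⟩ := ha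
  refine ⟨fun X X' Y Z => ?_, fun d X Y Z => ?_, fun X Y Y' Z => ?_,
    fun d X Y Z => ?_, fun X Y Z Z' => ?_, fun d X Y Z => ?_⟩ <;>
      simp only [Pi.smul_apply, smul_eq_mul]
  · linear_combination c * ha1 X X' Y Z
  · linear_combination c * ha2 d X Y Z
  · linear_combination c * ha3 X Y Y' Z
  · linear_combination c * ha4 d X Y Z
  · linear_combination c * ha5 X Y Z Z'
  · linear_combination c * ha6 d X Y Z

theorem IsTrilin.zero (n : ℕ) : IsTrilin n (0 : V n → V n → V n → ℝ) := by
  refine ⟨fun X X' Y Z => by simp, fun c X Y Z => by simp, fun X Y Y' Z => by simp,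
    fun c X Y Z => by simp, fun X Y Z Z' => by simp, fun c X Y Z => by simp⟩

/-- The kernel `g₃(P₂)` of the prolonged symbol of the extended Rapcsák operator:
symmetric trilinear forms `A` on `V` with `A(X, Y, C) = 0` and
`A(X, P_h Y, J Z) = A(X, P_h Z, J Y)`. -/
def g3P2 (n : ℕ) : Submodule ℝ (V n → V n → V n → ℝ) where
  carrier := {A | IsTrilin n A ∧
    (∀ X Y Z, A X Y Z = A Y X Z) ∧ (∀ X Y Z, A X Y Z = A X Z Y) ∧
    (∀ X Y, A X Y (Cvec n) = 0) ∧
    (∀ X Y Z, A X (Ph n Y) (Jmap n Z) = A X (Ph n Z) (Jmap n Y))}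
  add_mem' := by
    rintro a b ⟨haT, ha1, ha2, ha3, ha4⟩ ⟨hbT, hb1, hb2, hb3, hb4⟩
    refine ⟨haT.add hbT, fun X Y Z => ?_, fun X Y Z => ?_, fun X Y => ?_,
      fun X Y Z => ?_⟩ <;> simp only [Pi.add_apply]
    · linear_combination ha1 X Y Z + hb1 X Y Z
    · linear_combination ha2 X Y Z + hb2 X Y Z
    · linear_combination ha3 X Y + hb3 X Y
    · linear_combination ha4 X Y Z + hb4 X Y Z
  zero_mem' := ⟨IsTrilin.zero n, fun X Y Z => by simp, fun X Y Z => by simp,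
    fun X Y => by simp, fun X Y Z => by simp⟩
  smul_mem' := by
    rintro c a ⟨haT, ha1, ha2, ha3, ha4⟩
    refine ⟨haT.smul c, fun X Y Z => ?_, fun X Y Z => ?_, fun X Y => ?_,
      fun X Y Z => ?_⟩ <;> simp only [Pi.smul_apply, smul_eq_mul]
    · linear_combination c * ha1 X Y Z
    · linear_combination c * ha2 X Y Z
    · linear_combination c * ha3 X Y
    · linear_combination c * ha4 X Y Z


namespace G3

variable {m : ℕ}

/-- Index type for the basis of `V (m+1)`. -/
abbrev ι (m : ℕ) := Fin (m+1) ⊕ Fin (m+1)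

/-- The basis vectors of `V (m+1)`. -/
def bvec (p : ι m) : V (m+1) :=
  Sum.elim (fun i => ((fun k => if k = i then (1:ℝ) else 0), 0))
           (fun i => (0, (fun k => if k = i then (1:ℝ) else 0))) p

/-- Coordinates. -/
def co (p : ι m) (X : V (m+1)) : ℝ := Sum.elim (fun i => X.1 i) (fun i => X.2 i) p

def cnt (p : ι m) : ℕ := Sum.elim (fun _ => 0) (fun _ => 1) p
def idx (p : ι m) : Fin (m+1) := Sum.elim id id p

@[simp] lemma co_inl (i : Fin (m+1)) (X : V (m+1)) : co (Sum.inl i) X = X.1 i := rfl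
@[simp] lemma co_inr (i : Fin (m+1)) (X : V (m+1)) : co (Sum.inr i) X = X.2 i := rfl
@[simp] lemma cnt_inl (i : Fin (m+1)) : cnt (m := m) (Sum.inl i) = 0 := rfl
@[simp] lemma cnt_inr (i : Fin (m+1)) : cnt (m := m) (Sum.inr i) = 1 := rfl
@[simp] lemma idx_inl (i : Fin (m+1)) : idx (m := m) (Sum.inl i) = i := rfl
@[simp] lemma idx_inr (i : Fin (m+1)) : idx (m := m) (Sum.inr i) = i := rfl

lemma cnt_le (p : ι m) : cnt p ≤ 1 := by rcases p with i | i <;> simp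

@[simp] lemma co_add (p : ι m) (X Y : V (m+1)) : co p (X + Y) = co p X + co p Y := by
  rcases p with i | i <;> rfl

@[simp] lemma co_smul (p : ι m) (c : ℝ) (X : V (m+1)) : co p (c • X) = c * co p X := by
  rcases p with i | i <;> rfl

@[simp] lemma co_bvec (p q : ι m) : co p (bvec q) = if p = q then 1 else 0 := by
  rcases p with i | i <;> rcases q with j | j <;>
    simp [co, bvec, Sum.inl.injEq, Sum.inr.injEq] <;>
    by_cases h : i = j <;> simp [h]

lemma V_expand (X : V (m+1)) : X = ∑ p : ι m, co p X • bvec p := by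
  rw [Fintype.sum_sum_type]
  apply Prod.ext <;> funext k <;>
    simp [bvec, co, Prod.fst_sum, Prod.snd_sum, Finset.sum_ite_eq, mul_ite]

lemma Cvec_eq : Cvec (m+1) = bvec (Sum.inr (Fin.last m)) := by
  apply Prod.ext
  · rfl
  · funext k
    simp only [Cvec, vvec, dlt, bvec, Sum.elim_inr]
    by_cases h : (k : ℕ) + 1 = m + 1
    · have : k = Fin.last m := by
        apply Fin.ext; simp [Fin.last]; omega
      simp [h, this]
    · have : k ≠ Fin.last m := by
        intro e; subst e; simp [Fin.last] at h
      simp [h, this]; omega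

@[simp] lemma Ph_bvec_inl (i : Fin (m+1)) : Ph (m+1) (bvec (Sum.inl i)) = bvec (Sum.inl i) := rfl
@[simp] lemma Ph_bvec_inr (i : Fin (m+1)) : Ph (m+1) (bvec (Sum.inr i)) = 0 := by
  apply Prod.ext <;> rfl
@[simp] lemma J_bvec_inl (i : Fin (m+1)) : Jmap (m+1) (bvec (Sum.inl i)) = bvec (Sum.inr i) := rfl
@[simp] lemma J_bvec_inr (i : Fin (m+1)) : Jmap (m+1) (bvec (Sum.inr i)) = 0 := by
  apply Prod.ext <;> rfl


end G3

/-- Pairs of equal multisets. -/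
lemma mset2 {α : Type*} {a b a' b' : α}
    (h : ({a, b} : Multiset α) = {a', b'}) :
    (a = a' ∧ b = b') ∨ (a = b' ∧ b = a') := by
  rcases Multiset.cons_eq_cons.mp h with ⟨h1, h2⟩ | ⟨h1, cs, h2, h3⟩
  · left
    exact ⟨h1, Multiset.singleton_inj.mp h2⟩
  · right
    have hcs : cs = 0 := by
      have hc := congrArg Multiset.card h2
      simp only [Multiset.insert_eq_cons, Multiset.card_singleton, Multiset.card_cons] at hc
      exact Multiset.card_eq_zero.mp (by omega)
    subst hcs
    simp only [Multiset.cons_zero] at h2 h3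
    exact ⟨(Multiset.singleton_inj.mp h3).symm, Multiset.singleton_inj.mp h2⟩

/-- A fully symmetric ternary function depends only on the multiset of arguments. -/
lemma mset3 {α : Type*} {a b c a' b' c' : α}
    (h : ({a, b, c} : Multiset α) = {a', b', c'})
    (f : α → α → α → ℝ)
    (h1 : ∀ x y z, f x y z = f y x z) (h2 : ∀ x y z, f x y z = f x z y) :
    f a b c = f a' b' c' := by
  rcases Multiset.cons_eq_cons.mp h with ⟨e1, e2⟩ | ⟨e1, cs, e2, e3⟩
  · subst e1
    rcases mset2 e2 with ⟨e3, e4⟩ | ⟨e3, e4⟩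
    · subst e3; subst e4; rfl
    · subst e3; subst e4; exact h2 a b c
  · have hcs : ∃ x, cs = {x} := by
      have hc := congrArg Multiset.card e2
      simp only [Multiset.insert_eq_cons, Multiset.card_singleton, Multiset.card_cons] at hc
      exact Multiset.card_eq_one.mp (by omega)
    obtain ⟨x, rfl⟩ := hcs
    have hbc : ({b, c} : Multiset α) = {a', x} := e2
    have hbc' : ({b', c'} : Multiset α) = {a, x} := e3
    rcases mset2 hbc with ⟨f1, f2⟩ | ⟨f1, f2⟩ <;>
      rcases mset2 hbc' with ⟨g1, g2⟩ | ⟨g1, g2⟩ <;> rw [f1, f2, g1, g2]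
    · exact h1 a a' x
    · exact (h1 a a' x).trans (h2 a' a x)
    · exact (h2 a x a').trans (h1 a a' x)
    · exact ((h2 a x a').trans (h1 a a' x)).trans (h2 a' a x)

lemma msw12 {α : Type*} (a b c : α) : ({a, b, c} : Multiset α) = {b, a, c} :=
  show a ::ₘ b ::ₘ {c} = b ::ₘ a ::ₘ {c} from Multiset.cons_swap a b {c}

lemma msw23 {α : Type*} (a b c : α) : ({a, b, c} : Multiset α) = {a, c, b} :=
  show a ::ₘ b ::ₘ c ::ₘ 0 = a ::ₘ c ::ₘ b ::ₘ 0 from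
    congrArg (Multiset.cons a) (Multiset.cons_swap b c 0)

lemma msw13 {α : Type*} (a b c : α) : ({a, b, c} : Multiset α) = {c, b, a} := by
  rw [msw12, msw23, msw12]


namespace G3

/-- Indices other than the last one. -/
abbrev D (m : ℕ) := {i : Fin (m+1) // i ≠ Fin.last m}

/-- The parameter space. -/
abbrev κ (m : ℕ) := Sym (Fin (m+1)) 3 ⊕ Fin 3 × Sym (D m) 3

lemma card_κ (m : ℕ) :
    Fintype.card (κ m) = (m+3).choose 3 + 3 * (m+2).choose 3 := by
  have hD : Fintype.card (D m) = m := by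
    have : Fintype.card {i : Fin (m+1) // ¬ (i = Fin.last m)} =
        Fintype.card (Fin (m+1)) - Fintype.card {i : Fin (m+1) // i = Fin.last m} :=
      Fintype.card_subtype_compl _
    simpa [Fintype.card_subtype_eq] using this
  rw [Fintype.card_sum, Fintype.card_prod, Sym.card_sym_eq_choose, Sym.card_sym_eq_choose,
    hD, Fintype.card_fin, Fintype.card_fin]
  congr 1

/-- Push a multiset avoiding the last index down to the subtype. -/
def down (S : Sym (Fin (m+1)) 3) (h : Fin.last m ∉ S.1) : Sym (D m) 3 :=
  ⟨S.1.attach.map (fun x => (⟨x.1, fun e => h (e ▸ x.2)⟩ : D m)), by simpa using S.2⟩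

lemma down_spec (S : Sym (Fin (m+1)) 3) (h : Fin.last m ∉ S.1) :
    (down S h).1.map Subtype.val = S.1 := by
  show (S.1.attach.map _).map Subtype.val = S.1
  rw [Multiset.map_map]
  exact Multiset.attach_map_val S.1

/-- The canonical tensor entry associated to a count and a multiset of indices. -/
def T (c : κ m → ℝ) (k : ℕ) (hk : k ≤ 3) (S : Sym (Fin (m+1)) 3) : ℝ :=
  if k = 0 then c (Sum.inl S)
  else if h : Fin.last m ∈ S.1 then 0
  else c (Sum.inr (⟨k-1, by omega⟩, down S h))

lemma T_congr {c : κ m → ℝ} {k k' : ℕ} {hk : k ≤ 3} {hk' : k' ≤ 3}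
    {S S' : Sym (Fin (m+1)) 3} (e1 : k = k') (e2 : S = S') :
    T c k hk S = T c k' hk' S' := by subst e1; subst e2; rfl

def kk (p q r : ι m) : ℕ := cnt p + cnt q + cnt r

lemma kk_le (p q r : ι m) : kk p q r ≤ 3 := by
  have := cnt_le p; have := cnt_le q; have := cnt_le r; unfold kk; omega

def SS (p q r : ι m) : Sym (Fin (m+1)) 3 := ⟨{idx p, idx q, idx r}, by simp⟩

/-- The tensor built from parameters `c`. -/
def tt (c : κ m → ℝ) (p q r : ι m) : ℝ := T c (kk p q r) (kk_le p q r) (SS p q r)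

lemma tt_swap12 (c : κ m → ℝ) (p q r : ι m) : tt c p q r = tt c q p r :=
  T_congr (by unfold kk; omega) (Subtype.ext (show (({idx p, idx q, idx r} : Multiset _)) =
    ({idx q, idx p, idx r} : Multiset _) from Multiset.cons_swap _ _ _))

lemma tt_swap23 (c : κ m → ℝ) (p q r : ι m) : tt c p q r = tt c p r q :=
  T_congr (by unfold kk; omega) (Subtype.ext (show (({idx p, idx q, idx r} : Multiset _)) =
    ({idx p, idx r, idx q} : Multiset _) from
      congrArg (Multiset.cons (idx p)) (Multiset.cons_swap _ _ _)))

lemma tt_cross (c : κ m → ℝ) (p : ι m) (i j : Fin (m+1)) :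
    tt c p (Sum.inl i) (Sum.inr j) = tt c p (Sum.inl j) (Sum.inr i) :=
  T_congr (by unfold kk; simp) (Subtype.ext (show (({idx p, i, j} : Multiset _)) =
    ({idx p, j, i} : Multiset _) from
      congrArg (Multiset.cons (idx p)) (Multiset.cons_swap _ _ _)))

lemma tt_last (c : κ m → ℝ) (p q : ι m) : tt c p q (Sum.inr (Fin.last m)) = 0 := by
  have h0 : kk p q (Sum.inr (Fin.last m)) ≠ 0 := by unfold kk; simp
  have hmem : Fin.last m ∈ (SS p q (Sum.inr (Fin.last m))).1 := by
    show Fin.last m ∈ ({idx p, idx q, idx (Sum.inr (Fin.last m) : ι m)} : Multiset _)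
    simp
  unfold tt T
  rw [if_neg h0, dif_pos hmem]

lemma tt_add (c c' : κ m → ℝ) (p q r : ι m) :
    tt (c + c') p q r = tt c p q r + tt c' p q r := by
  unfold tt T
  split_ifs <;> simp

lemma tt_smul (a : ℝ) (c : κ m → ℝ) (p q r : ι m) :
    tt (a • c) p q r = a * tt c p q r := by
  unfold tt T
  split_ifs <;> simp

/-- Trilinear map from a tensor. -/
def mk3 (t : ι m → ι m → ι m → ℝ) : V (m+1) → V (m+1) → V (m+1) → ℝ :=
  fun X Y Z => ∑ p : ι m, ∑ q : ι m, ∑ r : ι m, co p X * co q Y * co r Z * t p q r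

lemma mk3_trilin (t : ι m → ι m → ι m → ℝ) : IsTrilin (m+1) (mk3 t) := by
  refine ⟨fun X X' Y Z => ?_, fun c X Y Z => ?_, fun X Y Y' Z => ?_, fun c X Y Z => ?_,
    fun X Y Z Z' => ?_, fun c X Y Z => ?_⟩ <;>
  · simp only [mk3, ← Finset.sum_add_distrib, Finset.mul_sum]
    refine Finset.sum_congr rfl fun p _ => ?_
    try simp only [← Finset.sum_add_distrib, Finset.mul_sum]
    refine Finset.sum_congr rfl fun q _ => ?_
    try simp only [← Finset.sum_add_distrib, Finset.mul_sum]
    refine Finset.sum_congr rfl fun r _ => ?_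
    simp only [co_add, co_smul]
    ring

lemma mk3_basis (t : ι m → ι m → ι m → ℝ) (p q r : ι m) :
    mk3 t (bvec p) (bvec q) (bvec r) = t p q r := by
  simp [mk3, co_bvec, ite_mul, zero_mul, one_mul, Finset.sum_ite_eq, Finset.sum_ite_eq']

lemma trilin_eq (A : V (m+1) → V (m+1) → V (m+1) → ℝ) (hA : IsTrilin (m+1) A) :
    A = mk3 (fun p q r => A (bvec p) (bvec q) (bvec r)) := by
  obtain ⟨h1, h2, h3, h4, h5, h6⟩ := hA
  have z1 : ∀ Y Z, A 0 Y Z = 0 := fun Y Z => by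
    have := h2 0 0 Y Z; simpa using this
  have z2 : ∀ X Z, A X 0 Z = 0 := fun X Z => by
    have := h4 0 X 0 Z; simpa using this
  have z3 : ∀ X Y, A X Y 0 = 0 := fun X Y => by
    have := h6 0 X Y 0; simpa using this
  have sum1 : ∀ (s : Finset (ι m)) (g : ι m → V (m+1)) (Y Z : V (m+1)),
      A (∑ p ∈ s, g p) Y Z = ∑ p ∈ s, A (g p) Y Z := by
    intro s g Y Z
    induction s using Finset.cons_induction with
    | empty => simpa using z1 Y Z
    | cons a s ha ih => rw [Finset.sum_cons, h1, ih, Finset.sum_cons]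
  have sum2 : ∀ (s : Finset (ι m)) (g : ι m → V (m+1)) (X Z : V (m+1)),
      A X (∑ p ∈ s, g p) Z = ∑ p ∈ s, A X (g p) Z := by
    intro s g X Z
    induction s using Finset.cons_induction with
    | empty => simpa using z2 X Z
    | cons a s ha ih => rw [Finset.sum_cons, h3, ih, Finset.sum_cons]
  have sum3 : ∀ (s : Finset (ι m)) (g : ι m → V (m+1)) (X Y : V (m+1)),
      A X Y (∑ p ∈ s, g p) = ∑ p ∈ s, A X Y (g p) := by
    intro s g X Y
    induction s using Finset.cons_induction with
    | empty => simpa using z3 X Y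
    | cons a s ha ih => rw [Finset.sum_cons, h5, ih, Finset.sum_cons]
  funext X Y Z
  have e1 : A X Y Z = ∑ p : ι m, co p X * A (bvec p) Y Z := by
    conv_lhs => rw [V_expand X]
    rw [sum1]
    exact Finset.sum_congr rfl fun p _ => h2 _ _ _ _
  have e2 : ∀ p, A (bvec p) Y Z = ∑ q : ι m, co q Y * A (bvec p) (bvec q) Z := fun p => by
    conv_lhs => rw [V_expand Y]
    rw [sum2]
    exact Finset.sum_congr rfl fun q _ => h4 _ _ _ _
  have e3 : ∀ p q, A (bvec p) (bvec q) Z =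
      ∑ r : ι m, co r Z * A (bvec p) (bvec q) (bvec r) := fun p q => by
    conv_lhs => rw [V_expand Z]
    rw [sum3]
    exact Finset.sum_congr rfl fun r _ => h6 _ _ _ _
  rw [e1]
  show _ = ∑ p : ι m, ∑ q : ι m, ∑ r : ι m, _
  refine Finset.sum_congr rfl fun p _ => ?_
  rw [e2 p, Finset.mul_sum]
  refine Finset.sum_congr rfl fun q _ => ?_
  rw [e3 p q, Finset.mul_sum, Finset.mul_sum]
  refine Finset.sum_congr rfl fun r _ => ?_
  ring

lemma trilin_ext {A B : V (m+1) → V (m+1) → V (m+1) → ℝ} (hA : IsTrilin (m+1) A)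
    (hB : IsTrilin (m+1) B)
    (h : ∀ p q r, A (bvec p) (bvec q) (bvec r) = B (bvec p) (bvec q) (bvec r)) : A = B := by
  rw [trilin_eq A hA, trilin_eq B hB]
  exact congrArg mk3 (funext fun p => funext fun q => funext fun r => h p q r)

variable {t : ι m → ι m → ι m → ℝ}

lemma mk3_sym12 (ht : ∀ p q r, t p q r = t q p r) (X Y Z : V (m+1)) :
    mk3 t X Y Z = mk3 t Y X Z := by
  unfold mk3
  rw [Finset.sum_comm]
  refine Finset.sum_congr rfl fun a _ => Finset.sum_congr rfl fun b _ =>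
    Finset.sum_congr rfl fun r _ => ?_
  rw [ht b a r]
  ring

lemma mk3_sym23 (ht : ∀ p q r, t p q r = t p r q) (X Y Z : V (m+1)) :
    mk3 t X Y Z = mk3 t X Z Y := by
  unfold mk3
  refine Finset.sum_congr rfl fun p _ => ?_
  rw [Finset.sum_comm]
  refine Finset.sum_congr rfl fun a _ => Finset.sum_congr rfl fun b _ => ?_
  rw [ht p b a]
  ring

@[simp] lemma co_inl_Ph (i : Fin (m+1)) (W : V (m+1)) :
    co (Sum.inl i) (Ph (m+1) W) = W.1 i := rfl
@[simp] lemma co_inr_Ph (i : Fin (m+1)) (W : V (m+1)) :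
    co (Sum.inr i) (Ph (m+1) W) = 0 := rfl
@[simp] lemma co_inl_J (i : Fin (m+1)) (W : V (m+1)) :
    co (Sum.inl i) (Jmap (m+1) W) = 0 := rfl
@[simp] lemma co_inr_J (i : Fin (m+1)) (W : V (m+1)) :
    co (Sum.inr i) (Jmap (m+1) W) = W.1 i := rfl

lemma mk3_PhJ (X W U : V (m+1)) :
    mk3 t X (Ph (m+1) W) (Jmap (m+1) U) =
      ∑ p : ι m, ∑ i : Fin (m+1), ∑ j : Fin (m+1),
        co p X * W.1 i * U.1 j * t p (Sum.inl i) (Sum.inr j) := by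
  unfold mk3
  refine Finset.sum_congr rfl fun p _ => ?_
  rw [Fintype.sum_sum_type]
  simp only [co_inl_Ph, co_inr_Ph, co_inl_J, co_inr_J, mul_zero, zero_mul,
    Finset.sum_const_zero, add_zero, zero_add]
  refine Finset.sum_congr rfl fun i _ => ?_
  rw [Fintype.sum_sum_type]
  simp only [co_inl_Ph, co_inr_Ph, co_inl_J, co_inr_J, mul_zero, zero_mul,
    Finset.sum_const_zero, add_zero, zero_add]

lemma mk3_mem (c : κ m → ℝ) : mk3 (tt c) ∈ g3P2 (m+1) := by
  refine ⟨mk3_trilin _, mk3_sym12 (tt_swap12 c), mk3_sym23 (tt_swap23 c), ?_, ?_⟩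
  · intro X Y
    rw [Cvec_eq]
    unfold mk3
    have : ∀ p q : ι m, ∑ r : ι m,
        co p X * co q Y * co r (bvec (Sum.inr (Fin.last m))) * tt c p q r
          = 0 := by
      intro p q
      rw [Finset.sum_eq_single (Sum.inr (Fin.last m))]
      · rw [tt_last]; ring
      · intro r _ hr
        rw [co_bvec, if_neg hr]; ring
      · intro h; exact absurd (Finset.mem_univ _) h
    simp only [this, Finset.sum_const_zero]
  · intro X Y Z
    rw [mk3_PhJ X Y Z, mk3_PhJ X Z Y]
    refine Finset.sum_congr rfl fun p _ => ?_
    rw [Finset.sum_comm]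
    refine Finset.sum_congr rfl fun i _ => Finset.sum_congr rfl fun j _ => ?_
    rw [tt_cross c p i j]
    ring

lemma sym3_exists {α : Type*} (s : Sym α 3) :
    ∃ a b c : α, s.1.toList = [a, b, c] ∧ s.1 = {a, b, c} := by
  have hl : s.1.toList.length = 3 := by rw [Multiset.length_toList]; exact s.2
  have hcoe : (↑s.1.toList : Multiset α) = s.1 := Multiset.coe_toList s.1
  rcases hL : s.1.toList with _ | ⟨a, _ | ⟨b, _ | ⟨c, _ | _⟩⟩⟩ <;>
    rw [hL] at hl <;> simp at hl
  refine ⟨a, b, c, rfl, ?_⟩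
  rw [← hcoe, hL]
  rfl

/-- Extract the `i`-th entry of a `Sym _ 3`. -/
def e0 (s : Sym (Fin (m+1)) 3) (i : ℕ) : Fin (m+1) := s.1.toList.getD i (Fin.last m)

def e1 (s : Sym (D m) 3) (i : ℕ) : Fin (m+1) :=
  (s.1.toList.map Subtype.val).getD i (Fin.last m)

/-- The parameters extracted from a tensor `F`. -/
def ΦF (F : ι m → ι m → ι m → ℝ) (z : κ m) : ℝ :=
  match z with
  | Sum.inl s => F (Sum.inl (e0 s 0)) (Sum.inl (e0 s 1)) (Sum.inl (e0 s 2))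
  | Sum.inr (w, s) =>
    if w.val = 0 then F (Sum.inl (e1 s 0)) (Sum.inl (e1 s 1)) (Sum.inr (e1 s 2))
    else if w.val = 1 then F (Sum.inl (e1 s 0)) (Sum.inr (e1 s 1)) (Sum.inr (e1 s 2))
    else F (Sum.inr (e1 s 0)) (Sum.inr (e1 s 1)) (Sum.inr (e1 s 2))

lemma ΦF_add (F G : ι m → ι m → ι m → ℝ) (z : κ m) :
    ΦF (fun p q r => F p q r + G p q r) z = ΦF F z + ΦF G z := by
  rcases z with s | ⟨w, s⟩
  · rfl
  · simp only [ΦF]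
    split_ifs <;> rfl

lemma ΦF_smul (a : ℝ) (F : ι m → ι m → ι m → ℝ) (z : κ m) :
    ΦF (fun p q r => a * F p q r) z = a * ΦF F z := by
  rcases z with s | ⟨w, s⟩
  · rfl
  · simp only [ΦF]
    split_ifs <;> rfl

theorem tt_recover (A : V (m+1) → V (m+1) → V (m+1) → ℝ) (hA : A ∈ g3P2 (m+1))
    (p q r : ι m) :
    tt (ΦF (fun p q r => A (bvec p) (bvec q) (bvec r))) p q r
      = A (bvec p) (bvec q) (bvec r) := by
  obtain ⟨hT, hs12, hs23, hC, hPJ⟩ := hA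
  set F : ι m → ι m → ι m → ℝ := fun p q r => A (bvec p) (bvec q) (bvec r) with hF
  have f12 : ∀ p q r, F p q r = F q p r := fun p q r => hs12 _ _ _
  have f23 : ∀ p q r, F p q r = F p r q := fun p q r => hs23 _ _ _
  have f13 : ∀ p q r, F p q r = F r q p := fun p q r => by rw [f12, f23, f12]
  have flast : ∀ p q, F p q (Sum.inr (Fin.last m)) = 0 := fun p q => by
    have h := hC (bvec p) (bvec q)
    rw [Cvec_eq] at h
    exact h
  have fcross : ∀ p i j, F p (Sum.inl i) (Sum.inr j) = F p (Sum.inl j) (Sum.inr i) := by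
    intro p i j
    have h := hPJ (bvec p) (bvec (Sum.inl i)) (bvec (Sum.inl j))
    rw [Ph_bvec_inl, Ph_bvec_inl, J_bvec_inl, J_bvec_inl] at h
    exact h
  -- vanishing lemmas
  have z3 : ∀ p q (j : Fin (m+1)),
      (idx p = Fin.last m ∨ idx q = Fin.last m ∨ j = Fin.last m) →
      F p q (Sum.inr j) = 0 := by
    have key : ∀ (p q : ι m) (j : Fin (m+1)), idx q = Fin.last m →
        F p q (Sum.inr j) = 0 := by
      intro p q j hq
      rcases q with i | i
      · simp only [idx_inl] at hq
        rw [hq, fcross]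
        exact flast _ _
      · simp only [idx_inr] at hq
        rw [hq, f23]
        exact flast _ _
    intro p q j h
    rcases h with hp | hq | hj
    · rw [f12]; exact key q p j hp
    · exact key p q j hq
    · rw [hj]; exact flast _ _
  have zmixed : ∀ p q r, kk p q r ≠ 0 →
      (idx p = Fin.last m ∨ idx q = Fin.last m ∨ idx r = Fin.last m) →
      F p q r = 0 := by
    intro p q r hk h
    rcases p with ip | ip <;> rcases q with jq | jq <;> rcases r with k | k <;>
      simp only [idx_inl, idx_inr] at h
    · exact absurd rfl hk
    · exact z3 _ _ _ (by simpa using h)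
    · rw [f23]; exact z3 _ _ _ (by simp only [idx_inl, idx_inr]; tauto)
    · exact z3 _ _ _ (by simpa using h)
    · rw [f13]; exact z3 _ _ _ (by simp only [idx_inl, idx_inr]; tauto)
    · exact z3 _ _ _ (by simpa using h)
    · rw [f13]; exact z3 _ _ _ (by simp only [idx_inl, idx_inr]; tauto)
    · exact z3 _ _ _ (by simpa using h)
  -- symmetric pattern functions
  set g0 : Fin (m+1) → Fin (m+1) → Fin (m+1) → ℝ :=
    fun i j k => F (Sum.inl i) (Sum.inl j) (Sum.inl k) with hg0
  set g1 : Fin (m+1) → Fin (m+1) → Fin (m+1) → ℝ :=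
    fun i j k => F (Sum.inl i) (Sum.inl j) (Sum.inr k) with hg1
  set g2 : Fin (m+1) → Fin (m+1) → Fin (m+1) → ℝ :=
    fun i j k => F (Sum.inl i) (Sum.inr j) (Sum.inr k) with hg2
  set g3 : Fin (m+1) → Fin (m+1) → Fin (m+1) → ℝ :=
    fun i j k => F (Sum.inr i) (Sum.inr j) (Sum.inr k) with hg3
  have g0s12 : ∀ x y z, g0 x y z = g0 y x z := fun x y z => f12 _ _ _
  have g0s23 : ∀ x y z, g0 x y z = g0 x z y := fun x y z => f23 _ _ _
  have g1s12 : ∀ x y z, g1 x y z = g1 y x z := fun x y z => f12 _ _ _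
  have g1s23 : ∀ x y z, g1 x y z = g1 x z y := fun x y z => fcross _ _ _
  have g2s23 : ∀ x y z, g2 x y z = g2 x z y := fun x y z => f23 _ _ _
  have g2s12 : ∀ x y z, g2 x y z = g2 y x z := by
    intro x y z
    show F (Sum.inl x) (Sum.inr y) (Sum.inr z) = F (Sum.inl y) (Sum.inr x) (Sum.inr z)
    rw [f13, f23, fcross, f23, f13]
  have g3s12 : ∀ x y z, g3 x y z = g3 y x z := fun x y z => f12 _ _ _
  have g3s23 : ∀ x y z, g3 x y z = g3 x z y := fun x y z => f23 _ _ _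
  have hd_of : ∀ (p q r : ι m), Fin.last m ∈ (SS p q r).1 →
      (idx p = Fin.last m ∨ idx q = Fin.last m ∨ idx r = Fin.last m) := by
    intro p q r hin
    have h : Fin.last m ∈ ({idx p, idx q, idx r} : Multiset (Fin (m+1))) := hin
    simp only [Multiset.insert_eq_cons, Multiset.mem_cons, Multiset.mem_singleton] at h
    rcases h with h | h | h
    exacts [Or.inl h.symm, Or.inr (Or.inl h.symm), Or.inr (Or.inr h.symm)]
  change tt (ΦF F) p q r = F p q r
  rcases p with i | i <;> rcases q with j | j <;> rcases r with k | k <;> unfold tt T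
  -- case (inl, inl, inl)
  · rw [if_pos (show kk (Sum.inl i) (Sum.inl j) (Sum.inl k) = 0 from rfl)]
    obtain ⟨x, y, z, hlist, hmset⟩ := sym3_exists (SS (Sum.inl i) (Sum.inl j) (Sum.inl k))
    have hv : ({x, y, z} : Multiset (Fin (m+1))) = {i, j, k} := by
      rw [← hmset]; rfl
    simp only [ΦF, e0, hlist, List.getD, List.getElem?_cons_zero, List.getElem?_cons_succ, Option.getD_some]
    exact mset3 hv g0 g0s12 g0s23
  -- case (inl, inl, inr)
  · rw [if_neg (show kk (Sum.inl i) (Sum.inl j) (Sum.inr k) ≠ 0 by simp [kk])]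
    by_cases hin : Fin.last m ∈ (SS (Sum.inl i) (Sum.inl j) (Sum.inr k)).1
    · rw [dif_pos hin]
      exact (zmixed _ _ _ (by simp [kk]) (hd_of _ _ _ hin)).symm
    · rw [dif_neg hin]
      obtain ⟨x, y, z, hlist, hmset⟩ :=
        sym3_exists (down (SS (Sum.inl i) (Sum.inl j) (Sum.inr k)) hin)
      have hv : ({x.1, y.1, z.1} : Multiset (Fin (m+1))) = {i, j, k} := by
        have d := down_spec (SS (Sum.inl i) (Sum.inl j) (Sum.inr k)) hin
        rw [hmset] at d
        simpa [SS] using d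
      simp only [ΦF, kk, cnt_inl, cnt_inr, e1, hlist, List.map_cons, List.map_nil,
        List.getD, List.getElem?_cons_zero, List.getElem?_cons_succ, Option.getD_some]
      norm_num
      exact mset3 hv g1 g1s12 g1s23
  -- case (inl, inr, inl)
  · rw [if_neg (show kk (Sum.inl i) (Sum.inr j) (Sum.inl k) ≠ 0 by simp [kk])]
    by_cases hin : Fin.last m ∈ (SS (Sum.inl i) (Sum.inr j) (Sum.inl k)).1
    · rw [dif_pos hin]
      exact (zmixed _ _ _ (by simp [kk]) (hd_of _ _ _ hin)).symm
    · rw [dif_neg hin]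
      obtain ⟨x, y, z, hlist, hmset⟩ :=
        sym3_exists (down (SS (Sum.inl i) (Sum.inr j) (Sum.inl k)) hin)
      have hv : ({x.1, y.1, z.1} : Multiset (Fin (m+1))) = {i, j, k} := by
        have d := down_spec (SS (Sum.inl i) (Sum.inr j) (Sum.inl k)) hin
        rw [hmset] at d
        simpa [SS] using d
      conv_rhs => rw [f23]
      simp only [ΦF, kk, cnt_inl, cnt_inr, e1, hlist, List.map_cons, List.map_nil,
        List.getD, List.getElem?_cons_zero, List.getElem?_cons_succ, Option.getD_some]
      norm_num
      exact mset3 (hv.trans (msw23 i j k)) g1 g1s12 g1s23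
  -- case (inl, inr, inr)
  · rw [if_neg (show kk (Sum.inl i) (Sum.inr j) (Sum.inr k) ≠ 0 by simp [kk])]
    by_cases hin : Fin.last m ∈ (SS (Sum.inl i) (Sum.inr j) (Sum.inr k)).1
    · rw [dif_pos hin]
      exact (zmixed _ _ _ (by simp [kk]) (hd_of _ _ _ hin)).symm
    · rw [dif_neg hin]
      obtain ⟨x, y, z, hlist, hmset⟩ :=
        sym3_exists (down (SS (Sum.inl i) (Sum.inr j) (Sum.inr k)) hin)
      have hv : ({x.1, y.1, z.1} : Multiset (Fin (m+1))) = {i, j, k} := by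
        have d := down_spec (SS (Sum.inl i) (Sum.inr j) (Sum.inr k)) hin
        rw [hmset] at d
        simpa [SS] using d
      simp only [ΦF, kk, cnt_inl, cnt_inr, e1, hlist, List.map_cons, List.map_nil,
        List.getD, List.getElem?_cons_zero, List.getElem?_cons_succ, Option.getD_some]
      norm_num
      exact mset3 hv g2 g2s12 g2s23
  -- case (inr, inl, inl)
  · rw [if_neg (show kk (Sum.inr i) (Sum.inl j) (Sum.inl k) ≠ 0 by simp [kk])]
    by_cases hin : Fin.last m ∈ (SS (Sum.inr i) (Sum.inl j) (Sum.inl k)).1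
    · rw [dif_pos hin]
      exact (zmixed _ _ _ (by simp [kk]) (hd_of _ _ _ hin)).symm
    · rw [dif_neg hin]
      obtain ⟨x, y, z, hlist, hmset⟩ :=
        sym3_exists (down (SS (Sum.inr i) (Sum.inl j) (Sum.inl k)) hin)
      have hv : ({x.1, y.1, z.1} : Multiset (Fin (m+1))) = {i, j, k} := by
        have d := down_spec (SS (Sum.inr i) (Sum.inl j) (Sum.inl k)) hin
        rw [hmset] at d
        simpa [SS] using d
      conv_rhs => rw [f13]
      simp only [ΦF, kk, cnt_inl, cnt_inr, e1, hlist, List.map_cons, List.map_nil,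
        List.getD, List.getElem?_cons_zero, List.getElem?_cons_succ, Option.getD_some]
      norm_num
      exact mset3 (hv.trans (msw13 i j k)) g1 g1s12 g1s23
  -- case (inr, inl, inr)
  · rw [if_neg (show kk (Sum.inr i) (Sum.inl j) (Sum.inr k) ≠ 0 by simp [kk])]
    by_cases hin : Fin.last m ∈ (SS (Sum.inr i) (Sum.inl j) (Sum.inr k)).1
    · rw [dif_pos hin]
      exact (zmixed _ _ _ (by simp [kk]) (hd_of _ _ _ hin)).symm
    · rw [dif_neg hin]
      obtain ⟨x, y, z, hlist, hmset⟩ :=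
        sym3_exists (down (SS (Sum.inr i) (Sum.inl j) (Sum.inr k)) hin)
      have hv : ({x.1, y.1, z.1} : Multiset (Fin (m+1))) = {i, j, k} := by
        have d := down_spec (SS (Sum.inr i) (Sum.inl j) (Sum.inr k)) hin
        rw [hmset] at d
        simpa [SS] using d
      conv_rhs => rw [f12]
      simp only [ΦF, kk, cnt_inl, cnt_inr, e1, hlist, List.map_cons, List.map_nil,
        List.getD, List.getElem?_cons_zero, List.getElem?_cons_succ, Option.getD_some]
      norm_num
      exact mset3 (hv.trans (msw12 i j k)) g2 g2s12 g2s23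
  -- case (inr, inr, inl)
  · rw [if_neg (show kk (Sum.inr i) (Sum.inr j) (Sum.inl k) ≠ 0 by simp [kk])]
    by_cases hin : Fin.last m ∈ (SS (Sum.inr i) (Sum.inr j) (Sum.inl k)).1
    · rw [dif_pos hin]
      exact (zmixed _ _ _ (by simp [kk]) (hd_of _ _ _ hin)).symm
    · rw [dif_neg hin]
      obtain ⟨x, y, z, hlist, hmset⟩ :=
        sym3_exists (down (SS (Sum.inr i) (Sum.inr j) (Sum.inl k)) hin)
      have hv : ({x.1, y.1, z.1} : Multiset (Fin (m+1))) = {i, j, k} := by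
        have d := down_spec (SS (Sum.inr i) (Sum.inr j) (Sum.inl k)) hin
        rw [hmset] at d
        simpa [SS] using d
      conv_rhs => rw [f13]
      simp only [ΦF, kk, cnt_inl, cnt_inr, e1, hlist, List.map_cons, List.map_nil,
        List.getD, List.getElem?_cons_zero, List.getElem?_cons_succ, Option.getD_some]
      norm_num
      exact mset3 (hv.trans (msw13 i j k)) g2 g2s12 g2s23
  -- case (inr, inr, inr)
  · rw [if_neg (show kk (Sum.inr i) (Sum.inr j) (Sum.inr k) ≠ 0 by simp [kk])]
    by_cases hin : Fin.last m ∈ (SS (Sum.inr i) (Sum.inr j) (Sum.inr k)).1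
    · rw [dif_pos hin]
      exact (zmixed _ _ _ (by simp [kk]) (hd_of _ _ _ hin)).symm
    · rw [dif_neg hin]
      obtain ⟨x, y, z, hlist, hmset⟩ :=
        sym3_exists (down (SS (Sum.inr i) (Sum.inr j) (Sum.inr k)) hin)
      have hv : ({x.1, y.1, z.1} : Multiset (Fin (m+1))) = {i, j, k} := by
        have d := down_spec (SS (Sum.inr i) (Sum.inr j) (Sum.inr k)) hin
        rw [hmset] at d
        simpa [SS] using d
      simp only [ΦF, kk, cnt_inl, cnt_inr, e1, hlist, List.map_cons, List.map_nil,
        List.getD, List.getElem?_cons_zero, List.getElem?_cons_succ, Option.getD_some]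
      norm_num
      exact mset3 hv g3 g3s12 g3s23


lemma ΦF_tt (c : κ m → ℝ) (z : κ m) : ΦF (tt c) z = c z := by
  rcases z with s | ⟨w, s⟩
  · obtain ⟨x, y, z', hlist, hmset⟩ := sym3_exists s
    simp only [ΦF, e0, hlist, List.getD, List.getElem?_cons_zero, List.getElem?_cons_succ, Option.getD_some]
    unfold tt T
    rw [if_pos (show kk (Sum.inl x) (Sum.inl y) (Sum.inl z') = 0 from rfl)]
    exact congrArg c (congrArg Sum.inl (Subtype.ext
      (show ({x, y, z'} : Multiset _) = s.1 from hmset.symm)))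
  · obtain ⟨x, y, z', hlist, hmset⟩ := sym3_exists s
    have hnot : ∀ (p q r : ι m), idx p = x.1 → idx q = y.1 → idx r = z'.1 →
        Fin.last m ∉ (SS p q r).1 := by
      intro p q r hp hq hr hmem
      have h : Fin.last m ∈ ({idx p, idx q, idx r} : Multiset (Fin (m+1))) := hmem
      simp only [Multiset.insert_eq_cons, Multiset.mem_cons, Multiset.mem_singleton] at h
      rcases h with h | h | h
      · exact x.2 (by rw [← hp, ← h])
      · exact y.2 (by rw [← hq, ← h])
      · exact z'.2 (by rw [← hr, ← h])
    have hdown : ∀ (p q r : ι m) (h : Fin.last m ∉ (SS p q r).1),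
        idx p = x.1 → idx q = y.1 → idx r = z'.1 → down (SS p q r) h = s := by
      intro p q r h hp hq hr
      refine Subtype.ext (Multiset.map_injective Subtype.val_injective ?_)
      rw [down_spec, hmset]
      show ({idx p, idx q, idx r} : Multiset _) = _
      rw [hp, hq, hr]
      simp
    fin_cases w
    · simp only [ΦF, e1, hlist, List.map_cons, List.map_nil, List.getD, List.getElem?_cons_zero, List.getElem?_cons_succ,
        Option.getD_some]
      rw [if_pos trivial]
      unfold tt T
      have h1 : Fin.last m ∉ (SS (Sum.inl x.1) (Sum.inl y.1) (Sum.inr z'.1)).1 :=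
        hnot _ _ _ rfl rfl rfl
      rw [if_neg (show kk (Sum.inl x.1) (Sum.inl y.1) (Sum.inr z'.1) ≠ 0 by simp [kk]),
        dif_neg h1, hdown _ _ _ h1 rfl rfl rfl]
      rfl
    · simp only [ΦF, e1, hlist, List.map_cons, List.map_nil, List.getD, List.getElem?_cons_zero, List.getElem?_cons_succ,
        Option.getD_some]
      rw [if_pos trivial]
      unfold tt T
      have h1 : Fin.last m ∉ (SS (Sum.inl x.1) (Sum.inr y.1) (Sum.inr z'.1)).1 :=
        hnot _ _ _ rfl rfl rfl
      rw [if_neg (show kk (Sum.inl x.1) (Sum.inr y.1) (Sum.inr z'.1) ≠ 0 by simp [kk]),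
        dif_neg h1, hdown _ _ _ h1 rfl rfl rfl]
      rfl
    · simp only [ΦF, e1, hlist, List.map_cons, List.map_nil, List.getD, List.getElem?_cons_zero, List.getElem?_cons_succ,
        Option.getD_some]
      unfold tt T
      have h1 : Fin.last m ∉ (SS (Sum.inr x.1) (Sum.inr y.1) (Sum.inr z'.1)).1 :=
        hnot _ _ _ rfl rfl rfl
      rw [if_neg (show kk (Sum.inr x.1) (Sum.inr y.1) (Sum.inr z'.1) ≠ 0 by simp [kk]),
        dif_neg h1, hdown _ _ _ h1 rfl rfl rfl]
      rfl

/-- The coordinate linear map. -/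
def ΦL (m : ℕ) : g3P2 (m+1) →ₗ[ℝ] (κ m → ℝ) where
  toFun A := ΦF (fun p q r => A.1 (bvec p) (bvec q) (bvec r))
  map_add' A B := by
    funext z
    exact ΦF_add (fun p q r => A.1 (bvec p) (bvec q) (bvec r))
      (fun p q r => B.1 (bvec p) (bvec q) (bvec r)) z
  map_smul' a A := by
    funext z
    exact ΦF_smul a (fun p q r => A.1 (bvec p) (bvec q) (bvec r)) z

/-- The inverse linear map. -/
def ΨL (m : ℕ) : (κ m → ℝ) →ₗ[ℝ] g3P2 (m+1) where
  toFun c := ⟨mk3 (tt c), mk3_mem c⟩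
  map_add' c c' := by
    refine Subtype.ext (funext fun X => funext fun Y => funext fun Z => ?_)
    show mk3 (tt (c + c')) X Y Z = mk3 (tt c) X Y Z + mk3 (tt c') X Y Z
    simp only [mk3, tt_add, mul_add, ← Finset.sum_add_distrib]
  map_smul' a c := by
    refine Subtype.ext (funext fun X => funext fun Y => funext fun Z => ?_)
    show mk3 (tt (a • c)) X Y Z = a * mk3 (tt c) X Y Z
    simp only [mk3, tt_smul, Finset.mul_sum]
    refine Finset.sum_congr rfl fun p _ => Finset.sum_congr rfl fun q _ =>
      Finset.sum_congr rfl fun r _ => ?_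
    ring

/-- The linear equivalence. -/
noncomputable def equivκ (m : ℕ) : g3P2 (m+1) ≃ₗ[ℝ] (κ m → ℝ) :=
  LinearEquiv.ofLinear (ΦL m) (ΨL m)
    (by
      refine LinearMap.ext fun c => funext fun z => ?_
      show ΦF (fun p q r => mk3 (tt c) (bvec p) (bvec q) (bvec r)) z = c z
      have h : (fun p q r => mk3 (tt c) (bvec p) (bvec q) (bvec r)) = tt c :=
        funext fun p => funext fun q => funext fun r => mk3_basis (tt c) p q r
      rw [h]
      exact ΦF_tt c z)
    (by
      refine LinearMap.ext fun A => Subtype.ext ?_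
      show mk3 (tt (ΦF (fun p q r => A.1 (bvec p) (bvec q) (bvec r)))) = A.1
      refine trilin_ext (mk3_trilin _) A.2.1 fun p q r => ?_
      rw [mk3_basis]
      exact tt_recover A.1 A.2 p q r)

theorem finrank_g3P2 (m : ℕ) :
    Module.finrank ℝ (g3P2 (m+1)) = (m+3).choose 3 + 3 * (m+2).choose 3 := by
  rw [(equivκ m).finrank_eq, Module.finrank_fintype_fun_eq_card, card_κ]

end G3

/-- the kernel `g₃(P₂)` of the prolonged symbol of the extended
Rapcsák operator has dimension `(4n³ + 3n² − n)/6`. -/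
theorem dim_g3P2 (n : ℕ) (hn : 1 ≤ n) :
    Module.finrank ℝ (g3P2 n) = (4 * n ^ 3 + 3 * n ^ 2 - n) / 6 := by
  obtain ⟨m, rfl⟩ : ∃ m, n = m + 1 := ⟨n - 1, by omega⟩
  rw [G3.finrank_g3P2 m]
  have ha := Nat.descFactorial_eq_factorial_mul_choose (m+3) 3
  have hb := Nat.descFactorial_eq_factorial_mul_choose (m+2) 3
  simp [Nat.descFactorial, Nat.factorial] at ha hb
  have h : 4*(m+1)^3 + 3*(m+1)^2 = (m+1) * ((m+2)*(m+3)) + 3*(m*((m+1)*(m+2))) + (m+1) := by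
    ring
  have key : 4*(m+1)^3 + 3*(m+1)^2 - (m+1)
      = 6 * ((m+3).choose 3 + 3 * (m+2).choose 3) := by
    rw [h, ha, hb]
    omega
  rw [key, Nat.mul_div_cancel_left _ (by norm_num : (0:ℕ) < 6)]
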